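/- Let d ≥ 6, and let F ⊆ 2^{[n]} be a hereditary family with minimum degree δ(F) ≥ 2^{d−1} − d + 1. Then every vertex x with |N(x)| = d satisfies: N(x) is a pile, i.e., N(x) ⊆ N(y) for every y ∈ N(x). -/

import Mathlib

open Finset

/-- The degree of `x` in `F`. -/
def deg (F : Finset (Finset ℕ)) (x : ℕ) : ℕ :=
  (F.filter (fun A => x ∈ A)).card

/-- The neighborhood `N(x) = ⋃_{x ∈ A ∈ F} A`. -/
def nbhd (F : Finset (Finset ℕ)) (x : ℕ) : Finset ℕ :=
  (F.filter (fun A => x ∈ A)).biUnion id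

lemma card_powerset_filter_subset (s t : Finset ℕ) (h : t ⊆ s) :
    ((s.powerset).filter (fun B => t ⊆ B)).card = 2 ^ (s.card - t.card) := by
  rw [← Finset.card_sdiff_of_subset h, ← Finset.card_powerset]
  apply Finset.card_bij' (fun B _ => B \ t) (fun B _ => B ∪ t)
  · intro B hB
    simp only [Finset.mem_filter, Finset.mem_powerset] at hB ⊢
    exact fun a ha => Finset.mem_sdiff.mpr ⟨hB.1 (Finset.mem_sdiff.mp ha).1, (Finset.mem_sdiff.mp ha).2⟩
  · intro B hB
    simp only [Finset.mem_filter, Finset.mem_powerset] at hB ⊢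
    constructor
    · exact Finset.union_subset (fun a ha => (Finset.mem_sdiff.mp (hB ha)).1) h
    · exact Finset.subset_union_right
  · intro B hB
    simp only [Finset.mem_filter, Finset.mem_powerset] at hB
    rw [Finset.sdiff_union_of_subset hB.2]
  · intro B hB
    simp only [Finset.mem_powerset] at hB
    rw [Finset.union_sdiff_right, Finset.sdiff_eq_self_iff_disjoint]
    exact Finset.disjoint_left.mpr (fun a ha => (Finset.mem_sdiff.mp (hB ha)).2)

lemma mem_nbhd {F : Finset (Finset ℕ)} {y z : ℕ} :
    z ∈ nbhd F y ↔ ∃ A ∈ F, y ∈ A ∧ z ∈ A := by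
  simp only [nbhd, Finset.mem_biUnion, Finset.mem_filter, id]
  tauto

/-- for `d ≥ 6` and a hereditary family `F ⊆ 2^{[n]}` with minimum degree
at least `2^{d-1} - d + 1`, every vertex `x` with `|N(x)| = d` satisfies `N(x) ⊆ N(y)`
for every `y ∈ N(x)` (so `N(x)` is a pile). -/
theorem stmt_15 (n d : ℕ) (hd : 6 ≤ d)
    (F : Finset (Finset ℕ)) (hF : F ⊆ (Finset.Icc 1 n).powerset)
    (hered : ∀ A ∈ F, ∀ B ⊆ A, B ∈ F)
    (hdelta : ∀ x ∈ Finset.Icc 1 n, 2 ^ (d - 1) - d + 1 ≤ deg F x)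
    (x : ℕ) (hx : x ∈ Finset.Icc 1 n) (hNx : (nbhd F x).card = d) :
    ∀ y ∈ nbhd F x, nbhd F x ⊆ nbhd F y := by
  intro y hy z hz
  obtain ⟨Ay, hAyF, hxAy, hyAy⟩ := mem_nbhd.mp hy
  obtain ⟨Az, hAzF, hxAz, hzAz⟩ := mem_nbhd.mp hz
  rw [mem_nbhd]
  by_cases hyz : y = z
  · subst hyz
    exact ⟨{y}, hered Az hAzF {y} (by simpa using hzAz), by simp, by simp⟩
  by_cases hxy : x = y
  · subst hxy
    exact ⟨Az, hAzF, hxAz, hzAz⟩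
  by_cases hxz : x = z
  · subst hxz
    exact ⟨Ay, hAyF, hyAy, hxAy⟩
  by_contra hcon
  push_neg at hcon
  -- x ∈ nbhd F x
  have hxN : x ∈ nbhd F x := mem_nbhd.mpr ⟨Ay, hAyF, hxAy, hxAy⟩
  set s := nbhd F x with hs
  -- every A ∈ F with x ∈ A lies in the restricted powerset
  have hsub : F.filter (fun A => x ∈ A) ⊆
      (s.powerset.filter (fun B => ({x} : Finset ℕ) ⊆ B)) \
      (s.powerset.filter (fun B => ({x, y, z} : Finset ℕ) ⊆ B)) := by
    intro A hA
    rw [Finset.mem_filter] at hA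
    have hAs : A ⊆ s := fun a ha => mem_nbhd.mpr ⟨A, hA.1, hA.2, ha⟩
    simp only [Finset.mem_sdiff, Finset.mem_filter, Finset.mem_powerset,
      Finset.singleton_subset_iff, Finset.insert_subset_iff] at *
    refine ⟨⟨hAs, hA.2⟩, ?_⟩
    rintro ⟨-, -, hyA, hzA⟩
    exact hcon A hA.1 hyA hzA
  -- cardinalities
  have hc1 : (s.powerset.filter (fun B => ({x} : Finset ℕ) ⊆ B)).card = 2 ^ (d - 1) := by
    rw [card_powerset_filter_subset s {x} (by simpa using hxN), hNx, Finset.card_singleton]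
  have hc3 : (s.powerset.filter (fun B => ({x, y, z} : Finset ℕ) ⊆ B)).card = 2 ^ (d - 3) := by
    rw [card_powerset_filter_subset s {x, y, z}
      (by simp only [Finset.insert_subset_iff, Finset.singleton_subset_iff]; exact ⟨hxN, hy, hz⟩),
      hNx]
    congr 1
    rw [Finset.card_insert_of_notMem (by simp [hxy, hxz]),
      Finset.card_insert_of_notMem (by simp [hyz]), Finset.card_singleton]
  have hmono : (s.powerset.filter (fun B => ({x, y, z} : Finset ℕ) ⊆ B)) ⊆
      (s.powerset.filter (fun B => ({x} : Finset ℕ) ⊆ B)) := by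
    intro B hB
    simp only [Finset.mem_filter, Finset.insert_subset_iff, Finset.singleton_subset_iff] at *
    exact ⟨hB.1, hB.2.1⟩
  have hcard : deg F x ≤ 2 ^ (d - 1) - 2 ^ (d - 3) := by
    calc deg F x ≤ _ := Finset.card_le_card hsub
    _ = 2 ^ (d - 1) - 2 ^ (d - 3) := by rw [Finset.card_sdiff_of_subset hmono, hc1, hc3]
  have hδ := hdelta x hx
  -- arithmetic contradiction
  obtain ⟨k, rfl⟩ : ∃ k, d = k + 6 := ⟨d - 6, by omega⟩
  have h2k : k + 1 ≤ 2 ^ k := Nat.lt_two_pow_self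
  have e1 : k + 6 - 1 = k + 5 := by omega
  have e3 : k + 6 - 3 = k + 3 := by omega
  simp only [e1, e3] at hcard hδ
  have h5 : 2 ^ (k + 5) = 32 * 2 ^ k := by ring
  have h3 : 2 ^ (k + 3) = 8 * 2 ^ k := by ring
  omega
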